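/- Let S be a left regular band, n ≥ 1, and a_1,…,a_n, i_1,…,i_n, d ∈ S. If d ≲ a_j⊔i_j for every j = 1,…,n, then, setting i = i_1⊔i_2⊔⋯⊔i_n, we have d ≲ a_j⊔i for every j = 1,…,n. -/

import Mathlib

/-- If `x` absorbs `y`, so does `x ⊔ z`. -/
lemma lrb_absorb {S : Type*} (op : S → S → S)
    (assoc : ∀ a b c, op a (op b c) = op (op a b) c)
    (lrb : ∀ a b, op a b = op (op a b) a)
    (x y z : S) (hxy : op x y = x) :
    op (op x z) y = op x z := by
  have h1 : op (op x z) y = op (op (op x z) x) y := by rw [← lrb]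
  rw [h1, ← assoc, hxy, ← lrb]

/-- A fold absorbs anything its starting point absorbs. -/
lemma lrb_foldl_absorb {S : Type*} (op : S → S → S)
    (assoc : ∀ a b c, op a (op b c) = op (op a b) c)
    (lrb : ∀ a b, op a b = op (op a b) a)
    (l : List S) : ∀ (b y : S), op b y = b →
    op (l.foldl op b) y = l.foldl op b := by
  induction l with
  | nil => intro b y hby; simpa using hby
  | cons hd tl ih =>
      intro b y hby
      simpa using ih (op b hd) y (lrb_absorb op assoc lrb b y hd hby)

/-- A fold absorbs each member of the list. -/
lemma lrb_foldl_absorb_mem {S : Type*} (op : S → S → S)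
    (assoc : ∀ a b c, op a (op b c) = op (op a b) c)
    (idem : ∀ a, op a a = a)
    (lrb : ∀ a b, op a b = op (op a b) a)
    (l : List S) : ∀ (b y : S), y ∈ l →
    op (l.foldl op b) y = l.foldl op b := by
  induction l with
  | nil => intro b y hy; simp at hy
  | cons hd tl ih =>
      intro b y hy
      rcases List.mem_cons.mp hy with rfl | hy
      · exact lrb_foldl_absorb op assoc lrb tl (op b y) y
          (by rw [← assoc, idem])
      · exact ih (op b hd) y hy

/-- Let `S` be a left regular band, `n ≥ 1` and
`a_1,…,a_n, i_1,…,i_n, d ∈ S` (indexed here by `Fin (n+1)` so that there is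
at least one index).  If `d ≲ a_j ⊔ i_j` for every `j`, then, setting
`i = i_0 ⊔ i_1 ⊔ ⋯ ⊔ i_n`, we have `d ≲ a_j ⊔ i` for every `j`
(where `x ≲ y` means `y ⊔ x = y`). -/
theorem stmt_2 {S : Type*} (op : S → S → S)
    (assoc : ∀ a b c, op a (op b c) = op (op a b) c)
    (idem : ∀ a, op a a = a)
    (lrb : ∀ a b, op a b = op (op a b) a)
    (n : ℕ) (a iv : Fin (n + 1) → S) (d : S)
    (h : ∀ j, op (op (a j) (iv j)) d = op (a j) (iv j)) :
    ∀ j, op (op (a j) ((List.ofFn fun k : Fin n => iv k.succ).foldl op (iv 0))) d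
        = op (a j) ((List.ofFn fun k : Fin n => iv k.succ).foldl op (iv 0)) := by
  intro j
  set l : List S := List.ofFn fun k : Fin n => iv k.succ with hl
  set i : S := l.foldl op (iv 0) with hi
  -- the big fold absorbs every `iv j`
  have habs : ∀ j : Fin (n + 1), op i (iv j) = i := by
    intro j
    induction j using Fin.cases with
    | zero => exact lrb_foldl_absorb op assoc lrb l (iv 0) (iv 0) (idem _)
    | succ k =>
        exact lrb_foldl_absorb_mem op assoc idem lrb l (iv 0) (iv k.succ)
          (by rw [hl]; exact List.mem_ofFn.mpr ⟨k, rfl⟩)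
  set x : S := op (a j) i with hx
  have hxa : op x (a j) = x := by rw [hx, ← lrb]
  have hxiv : op x (iv j) = x := by rw [hx, ← assoc, habs]
  have hxw : op x (op (a j) (iv j)) = x := by rw [assoc, hxa, hxiv]
  calc op x d = op (op x (op (a j) (iv j))) d := by rw [hxw]
    _ = op x (op (op (a j) (iv j)) d) := (assoc _ _ _).symm
    _ = op x (op (a j) (iv j)) := by rw [h j]
    _ = x := hxw
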